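/- Fix i ≥ 1, u ∈ (0,1), q ∈ [0,1), and α > 0, and set p = α/K. Then K·I₁ → α·i·(1-q)·e^{-α(1-u)}·(u·ln u − u + 1)/ln 2 as K → ∞, where I₁ = i(1-q)(1-p+pu)^K·((pu/(1-p+pu))·log₂ u − log₂(1-p+pu)). -/

import Mathlib

open Filter Real

/-- The lead term I₁ of the mutual information. -/
noncomputable def I1 (K : ℕ) (i : ℕ) (p u q : ℝ) : ℝ :=
  (i : ℝ) * (1 - q) * (1 - p + p * u) ^ K *
    (p * u / (1 - p + p * u) * Real.logb 2 u - Real.logb 2 (1 - p + p * u))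

/-- With p = α/K, K·I₁ → α·i·(1-q)·e^{-α(1-u)}·(u ln u − u + 1)/ln 2
as K → ∞. -/
theorem KI1_tendsto (i : ℕ) (hi : 1 ≤ i) (u q α : ℝ)
    (hu : u ∈ Set.Ioo (0:ℝ) 1) (hq : q ∈ Set.Ico (0:ℝ) 1) (hα : 0 < α) :
    Tendsto (fun K : ℕ => (K : ℝ) * I1 K i (α / K) u q) atTop
      (nhds (α * i * (1 - q) * Real.exp (-α * (1 - u)) *
        (u * Real.log u - u + 1) / Real.log 2)) := by
  set t : ℝ := -α * (1 - u) with ht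
  -- main limits
  have h1 : Tendsto (fun K : ℕ => (1 + t / (K : ℝ)) ^ K) atTop (nhds (Real.exp t)) :=
    Real.tendsto_one_add_div_pow_exp t
  have h2 : Tendsto (fun K : ℕ => (K : ℝ) * Real.log (1 + t / (K : ℝ))) atTop (nhds t) :=
    (Real.tendsto_mul_log_one_add_div_atTop t).comp tendsto_natCast_atTop_atTop
  have h3 : Tendsto (fun K : ℕ => (1 + t / (K : ℝ))) atTop (nhds 1) := by
    have : Tendsto (fun K : ℕ => t / (K : ℝ)) atTop (nhds 0) :=
      tendsto_const_div_atTop_nhds_zero_nat t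
    simpa using this.const_add 1
  have h4 : Tendsto (fun K : ℕ => α * u / (1 + t / (K : ℝ)) * Real.log u) atTop
      (nhds (α * u * Real.log u)) := by
    have := ((tendsto_const_nhds (x := α * u)).div h3 one_ne_zero).mul
      (tendsto_const_nhds (x := Real.log u) (f := atTop))
    simpa using this
  -- the rewritten function
  have hkey : Tendsto (fun K : ℕ =>
      (i : ℝ) * (1 - q) * ((1 + t / (K : ℝ)) ^ K) *
        ((α * u / (1 + t / (K : ℝ)) * Real.log u
          - (K : ℝ) * Real.log (1 + t / (K : ℝ))) / Real.log 2)) atTop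
      (nhds ((i : ℝ) * (1 - q) * Real.exp t * ((α * u * Real.log u - t) / Real.log 2))) := by
    exact (((tendsto_const_nhds (x := (i : ℝ) * (1 - q))).mul h1).mul
      (((h4.sub h2)).div_const (Real.log 2)))
  have heq : (i : ℝ) * (1 - q) * Real.exp t * ((α * u * Real.log u - t) / Real.log 2)
      = α * i * (1 - q) * Real.exp (-α * (1 - u)) * (u * Real.log u - u + 1) / Real.log 2 := by
    rw [ht]; ring
  rw [← heq]
  refine hkey.congr' ?_
  filter_upwards [eventually_ge_atTop 1] with K hK
  have hK0 : (K : ℝ) ≠ 0 := Nat.cast_ne_zero.mpr (by omega)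
  have hx : 1 - α / (K : ℝ) + α / (K : ℝ) * u = 1 + t / (K : ℝ) := by
    rw [ht]; field_simp; ring
  have hlog2 : Real.log 2 ≠ 0 := by
    exact ne_of_gt (Real.log_pos (by norm_num))
  simp only [I1, hx, Real.logb]
  set x := 1 + t / (K : ℝ) with hxdef
  by_cases hx0 : x = 0
  · simp [hx0, Real.log_zero]
  · field_simp
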